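/- For every integer ℓ ≥ n₀, the family (Ψ_n^{(ℓ)})_{n∈ℤ} satisfies: Ψ_n^{(ℓ)}(0) = 1 if n = ℓ and Ψ_n^{(ℓ)}(0) = 0 otherwise, and for every n ∈ ℤ with n ≥ n₀ + 1 and every t > 0, d/dt Ψ_n^{(ℓ)}(t) = (γ(2^n)/4)·(Ψ_{n−1}^{(ℓ)}(t) − Ψ_n^{(ℓ)}(t)). Moreover there exists a constant c₁ > 0 depending only on β such that |Ψ_n^{(ℓ)}(t) − Ψ_{n+1}^{(ℓ)}(t)| ≤ c₁·2^{−β(n−ℓ)}·e^{−γ(2^ℓ)t/4} for all n ≥ ℓ ≥ n₀ and all t > 0. -/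

import Mathlib

open Filter Topology Asymptotics MeasureTheory

noncomputable section

/-- The hypotheses on the fragmentation coefficient `γ` in the region `n ≥ n₀`:
monotonicity along powers of two and two-sided power-law bounds of exponent `β`. -/
def GammaHyp (β : ℝ) (γ : ℝ → ℝ) (n₀ : ℕ) : Prop :=
  (∀ ξ : ℝ, 0 < ξ → 0 < γ ξ) ∧
  (∀ n : ℤ, (n₀:ℤ) ≤ n → γ ((2:ℝ) ^ n) < γ ((2:ℝ) ^ (n + 1))) ∧
  ∀ n m : ℤ, (n₀:ℤ) ≤ n → (n₀:ℤ) ≤ m →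
    1 / 2 * (2:ℝ) ^ (β * ((n:ℝ) - (m:ℝ))) ≤ γ ((2:ℝ) ^ n) / γ ((2:ℝ) ^ m) ∧
      γ ((2:ℝ) ^ n) / γ ((2:ℝ) ^ m) ≤ 3 / 2 * (2:ℝ) ^ (β * ((n:ℝ) - (m:ℝ)))

/-- The fundamental solution
`Ψ_n^{(ℓ)}(t) = Σ_{k=ℓ}^n (γ(2^k)/γ(2^ℓ)) ∏_{j=ℓ, j≠k}^n (1 − γ(2^k)/γ(2^j))⁻¹ e^{−γ(2^k)t/4}`
for `n ≥ ℓ`, and `Ψ_n^{(ℓ)}(t) = 0` for `n < ℓ`. -/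
def Psi (γ : ℝ → ℝ) (l n : ℤ) (t : ℝ) : ℝ :=
  if l ≤ n then
    ∑ c ∈ Finset.Icc l n,
      γ ((2:ℝ) ^ c) / γ ((2:ℝ) ^ l) *
        (∏ j ∈ (Finset.Icc l n).erase c, (1 - γ ((2:ℝ) ^ c) / γ ((2:ℝ) ^ j))⁻¹) *
        Real.exp (-(γ ((2:ℝ) ^ c) * t / 4))
  else 0

noncomputable def Aco (γ : ℝ → ℝ) (l n k : ℤ) : ℝ :=
  γ ((2:ℝ) ^ k) / γ ((2:ℝ) ^ l) *
    ∏ j ∈ (Finset.Icc l n).erase k, (1 - γ ((2:ℝ) ^ k) / γ ((2:ℝ) ^ j))⁻¹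

lemma Psi_eq {γ : ℝ → ℝ} {l n : ℤ} (hln : l ≤ n) (t : ℝ) :
    Psi γ l n t = ∑ k ∈ Finset.Icc l n, Aco γ l n k * Real.exp (-(γ ((2:ℝ) ^ k) * t / 4)) := by
  rw [Psi, if_pos hln]; rfl

lemma Psi_neg {γ : ℝ → ℝ} {l n : ℤ} (hln : n < l) (t : ℝ) : Psi γ l n t = 0 := by
  rw [Psi, if_neg (not_le.mpr hln)]

section aux
variable {β : ℝ} {γ : ℝ → ℝ} {n₀ : ℕ} (hγ : GammaHyp β γ n₀)

include hγ

lemma apos (k : ℤ) : 0 < γ ((2:ℝ) ^ k) := hγ.1 _ (zpow_pos two_pos k)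

lemma amono : ∀ {m n : ℤ}, (n₀:ℤ) ≤ m → m < n → γ ((2:ℝ) ^ m) < γ ((2:ℝ) ^ n) := by
  intro m n hm hmn
  have key : ∀ d : ℕ, γ ((2:ℝ) ^ m) < γ ((2:ℝ) ^ (m + 1 + (d:ℤ))) := by
    intro d
    induction d with
    | zero => simpa using hγ.2.1 m hm
    | succ d ih =>
        have := hγ.2.1 (m + 1 + (d:ℤ)) (by omega)
        push_cast
        push_cast at ih this
        have e : m + 1 + ((d:ℤ) + 1) = m + 1 + (d:ℤ) + 1 := by ring
        rw [e]
        exact ih.trans this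
  have := key (n - m - 1).toNat
  rwa [show m + 1 + ((n - m - 1).toNat : ℤ) = n by omega] at this

lemma ainjOn {j k : ℤ} (hj : (n₀:ℤ) ≤ j) (hk : (n₀:ℤ) ≤ k) (hjk : j ≠ k) :
    γ ((2:ℝ) ^ j) ≠ γ ((2:ℝ) ^ k) := by
  rcases lt_or_gt_of_ne hjk with h | h
  · exact ne_of_lt (amono hγ hj h)
  · exact (ne_of_lt (amono hγ hk h)).symm

lemma ale {j k : ℤ} (hj : (n₀:ℤ) ≤ j) (hjk : j ≤ k) :
    γ ((2:ℝ) ^ j) ≤ γ ((2:ℝ) ^ k) := by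
  rcases eq_or_lt_of_le hjk with rfl | h
  · exact le_refl _
  · exact le_of_lt (amono hγ hj h)

lemma Aco_succ {l n k : ℤ} (hl : (n₀:ℤ) ≤ l) (hlk : l ≤ k) (hkn : k ≤ n) :
    Aco γ l n k = Aco γ l (n + 1) k * (1 - γ ((2:ℝ) ^ k) / γ ((2:ℝ) ^ (n + 1))) := by
  have hne : γ ((2:ℝ) ^ k) ≠ γ ((2:ℝ) ^ (n + 1)) :=
    ainjOn hγ (by omega) (by omega) (by omega)
  have h1 : (1 : ℝ) - γ ((2:ℝ) ^ k) / γ ((2:ℝ) ^ (n + 1)) ≠ 0 := by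
    rw [sub_ne_zero]
    intro h
    exact hne ((div_eq_one_iff_eq (ne_of_gt (apos hγ (n+1)))).mp h.symm)
  have hset : (Finset.Icc l (n+1)).erase k = insert (n+1) ((Finset.Icc l n).erase k) := by
    ext j; simp only [Finset.mem_erase, Finset.mem_Icc, Finset.mem_insert]; omega
  have hnm : (n+1) ∉ (Finset.Icc l n).erase k := by
    simp only [Finset.mem_erase, Finset.mem_Icc]; omega
  rw [Aco, Aco, hset, Finset.prod_insert hnm]
  set r := γ ((2:ℝ) ^ k) / γ ((2:ℝ) ^ l)
  set x := γ ((2:ℝ) ^ k) / γ ((2:ℝ) ^ (n + 1))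
  set P := ∏ j ∈ (Finset.Icc l n).erase k, (1 - γ ((2:ℝ) ^ k) / γ ((2:ℝ) ^ j))⁻¹
  have h2 : r * ((1 - x)⁻¹ * P) * (1 - x) = r * P * ((1 - x)⁻¹ * (1 - x)) := by ring
  rw [h2, inv_mul_cancel₀ h1, mul_one]

lemma psi_diff {l n : ℤ} (hl : (n₀:ℤ) ≤ l) (hln : l ≤ n) (t : ℝ) :
    Psi γ l n t - Psi γ l (n + 1) t =
      - ∑ k ∈ Finset.Icc l (n+1), γ ((2:ℝ) ^ k) / γ ((2:ℝ) ^ (n+1)) * Aco γ l (n+1) k *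
          Real.exp (-(γ ((2:ℝ) ^ k) * t / 4)) := by
  have hset : Finset.Icc l (n+1) = insert (n+1) (Finset.Icc l n) := by
    ext j; simp only [Finset.mem_Icc, Finset.mem_insert]; omega
  have hnm : (n+1) ∉ Finset.Icc l n := by simp only [Finset.mem_Icc]; omega
  rw [Psi_eq hln, Psi_eq (by omega : l ≤ n + 1), hset, Finset.sum_insert hnm,
    Finset.sum_insert hnm, div_self (ne_of_gt (apos hγ (n+1)))]
  have hterm : ∀ k ∈ Finset.Icc l n,
      Aco γ l n k * Real.exp (-(γ ((2:ℝ) ^ k) * t / 4)) =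
        Aco γ l (n+1) k * Real.exp (-(γ ((2:ℝ) ^ k) * t / 4)) -
          γ ((2:ℝ) ^ k) / γ ((2:ℝ) ^ (n+1)) * Aco γ l (n+1) k *
            Real.exp (-(γ ((2:ℝ) ^ k) * t / 4)) := by
    intro k hk
    rw [Finset.mem_Icc] at hk
    rw [Aco_succ hγ hl hk.1 hk.2]
    ring
  rw [Finset.sum_congr rfl hterm, Finset.sum_sub_distrib]
  ring

lemma hasDeriv_psi_sum {l n : ℤ} (hln : l ≤ n) (t : ℝ) :
    HasDerivAt (fun s => Psi γ l n s)
      (∑ k ∈ Finset.Icc l n, Aco γ l n k * (-(γ ((2:ℝ) ^ k) / 4)) *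
        Real.exp (-(γ ((2:ℝ) ^ k) * t / 4))) t := by
  have hfn : (fun s => Psi γ l n s) =
      fun s => ∑ k ∈ Finset.Icc l n, Aco γ l n k * Real.exp (-(γ ((2:ℝ) ^ k) * s / 4)) :=
    funext fun s => Psi_eq hln s
  rw [hfn]
  apply HasDerivAt.fun_sum
  intro k _
  set a := γ ((2:ℝ) ^ k)
  have h0 : HasDerivAt (fun s : ℝ => -(a * s / 4)) (-(a / 4)) t := by
    simpa using (((hasDerivAt_id t).const_mul a).div_const 4).fun_neg
  have h1 := (h0.exp).const_mul (Aco γ l n k)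
  exact h1.congr_deriv (by ring)

lemma part2deriv {l : ℤ} (hl : (n₀:ℤ) ≤ l) (n : ℤ) (hn : (n₀:ℤ) + 1 ≤ n) (t : ℝ) :
    HasDerivAt (fun s => Psi γ l n s)
      (γ ((2:ℝ) ^ n) / 4 * (Psi γ l (n - 1) t - Psi γ l n t)) t := by
  rcases lt_or_ge n l with h | hln
  · have hfn : (fun s => Psi γ l n s) = fun _ => (0:ℝ) := funext fun s => Psi_neg h s
    rw [Psi_neg (by omega) t, Psi_neg h t, hfn]
    simpa using hasDerivAt_const t (0:ℝ)
  · have hd := hasDeriv_psi_sum hγ hln t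
    rcases eq_or_lt_of_le hln with rfl | hlt
    · convert hd using 1
      rw [Psi_neg (by omega) t, Psi_eq le_rfl t, Finset.Icc_self, Finset.sum_singleton,
        Finset.sum_singleton, Aco, Finset.Icc_self, Finset.erase_singleton,
        Finset.prod_empty, div_self (ne_of_gt (apos hγ l))]
      ring
    · have hdiff := psi_diff hγ hl (by omega : l ≤ n - 1) t
      rw [show n - 1 + 1 = n by ring] at hdiff
      convert hd using 1
      rw [hdiff, mul_neg, Finset.mul_sum, ← Finset.sum_neg_distrib]
      refine Finset.sum_congr rfl fun k hk => ?_
      have hne : γ ((2:ℝ) ^ n) ≠ 0 := ne_of_gt (apos hγ n)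
      field_simp

omit hγ in
lemma lagrange_coeff_sum {ι : Type*} [DecidableEq ι] (s : Finset ι) (v : ι → ℝ)
    (hvs : Set.InjOn v s) (hs : 2 ≤ s.card) :
    ∑ i ∈ s, ∏ j ∈ s.erase i, (v i - v j)⁻¹ = 0 := by
  classical
  have h := Lagrange.sum_basis hvs (Finset.card_pos.mp (by omega))
  have h2 := congrArg (fun p => Polynomial.coeff p (s.card - 1)) h
  simp only [Polynomial.finset_sum_coeff] at h2
  rw [Polynomial.coeff_one, if_neg (by omega)] at h2
  rw [← h2]
  refine Finset.sum_congr rfl fun i hi => ?_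
  have hmon : ((s.erase i).prod fun j => (Polynomial.X - Polynomial.C (v j))).Monic :=
    Polynomial.monic_prod_of_monic _ _ fun j _ => Polynomial.monic_X_sub_C (v j)
  have hdeg : ((s.erase i).prod fun j => (Polynomial.X - Polynomial.C (v j))).natDegree
      = s.card - 1 := by
    rw [Polynomial.natDegree_prod_of_monic _ _ fun j _ => Polynomial.monic_X_sub_C (v j)]
    simp [Finset.card_erase_of_mem hi]
  have hb : Lagrange.basis s v i
      = Polynomial.C (∏ j ∈ s.erase i, (v i - v j)⁻¹) *
        ∏ j ∈ s.erase i, (Polynomial.X - Polynomial.C (v j)) := by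
    rw [Lagrange.basis, map_prod, ← Finset.prod_mul_distrib]
    rfl
  rw [hb, Polynomial.coeff_C_mul, ← hdeg, hmon.coeff_natDegree, mul_one]

lemma part1init {l : ℤ} (hl : (n₀:ℤ) ≤ l) (n : ℤ) :
    Psi γ l n 0 = if n = l then 1 else 0 := by
  rcases lt_trichotomy n l with h | rfl | h
  · rw [Psi_neg h, if_neg (by omega)]
  · rw [if_pos rfl, Psi_eq le_rfl, Finset.Icc_self, Finset.sum_singleton, Aco,
      Finset.Icc_self, Finset.erase_singleton, Finset.prod_empty,
      div_self (ne_of_gt (apos hγ n))]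
    simp
  · rw [if_neg (by omega), Psi_eq (by omega : l ≤ n)]
    have hexp : ∀ k : ℤ, Real.exp (-(γ ((2:ℝ) ^ k) * 0 / 4)) = 1 := by simp
    simp only [hexp, mul_one]
    have hcard : 2 ≤ (Finset.Icc l n).card := by
      rw [Int.card_Icc]; omega
    have hmem : ∀ {j : ℤ}, j ∈ Finset.Icc l n → (n₀:ℤ) ≤ j := by
      intro j hj; rw [Finset.mem_Icc] at hj; omega
    have hinj : Set.InjOn (fun k : ℤ => γ ((2:ℝ) ^ k)) (Finset.Icc l n) := by
      intro j hj k hk hjk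
      by_contra hne
      exact ainjOn hγ (hmem hj) (hmem hk) hne hjk
    have key := lagrange_coeff_sum (Finset.Icc l n) (fun k : ℤ => γ ((2:ℝ) ^ k)) hinj hcard
    have hterm : ∀ k ∈ Finset.Icc l n, Aco γ l n k =
        ((-1 : ℝ) ^ ((Finset.Icc l n).card - 1) * (∏ j ∈ Finset.Icc l n, γ ((2:ℝ) ^ j)) /
          γ ((2:ℝ) ^ l)) * ∏ j ∈ (Finset.Icc l n).erase k, (γ ((2:ℝ) ^ k) - γ ((2:ℝ) ^ j))⁻¹ := by
      intro k hk
      have hfac : ∀ j ∈ (Finset.Icc l n).erase k,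
          (1 - γ ((2:ℝ) ^ k) / γ ((2:ℝ) ^ j))⁻¹
            = (-(γ ((2:ℝ) ^ j))) * (γ ((2:ℝ) ^ k) - γ ((2:ℝ) ^ j))⁻¹ := by
        intro j hj
        rw [Finset.mem_erase] at hj
        have hj0 : γ ((2:ℝ) ^ j) ≠ 0 := ne_of_gt (apos hγ j)
        have hne : γ ((2:ℝ) ^ k) - γ ((2:ℝ) ^ j) ≠ 0 :=
          sub_ne_zero.mpr (ainjOn hγ (hmem hk) (hmem hj.2) (Ne.symm hj.1))
        have h1 : 1 - γ ((2:ℝ) ^ k) / γ ((2:ℝ) ^ j)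
            = (γ ((2:ℝ) ^ k) - γ ((2:ℝ) ^ j)) * (-(γ ((2:ℝ) ^ j)))⁻¹ := by
          rw [inv_neg]
          field_simp
          ring
        rw [h1, mul_inv, inv_inv, mul_comm]
      rw [Aco, Finset.prod_congr rfl hfac, Finset.prod_mul_distrib]
      have hneg : ∏ j ∈ (Finset.Icc l n).erase k, (-(γ ((2:ℝ) ^ j)))
          = (-1 : ℝ) ^ ((Finset.Icc l n).card - 1) *
            ∏ j ∈ (Finset.Icc l n).erase k, γ ((2:ℝ) ^ j) := by
        rw [show (fun j : ℤ => -(γ ((2:ℝ) ^ j))) = fun j : ℤ => (-1 : ℝ) * γ ((2:ℝ) ^ j) from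
          funext fun j => by ring]
        rw [Finset.prod_mul_distrib, Finset.prod_const, Finset.card_erase_of_mem hk]
      rw [hneg, ← Finset.mul_prod_erase (Finset.Icc l n) (fun j => γ ((2:ℝ) ^ j)) hk]
      ring
    rw [Finset.sum_congr rfl hterm, ← Finset.mul_sum, key, mul_zero]

omit hγ in
lemma sum_Icc_nat (f : ℤ → ℝ) (a b : ℤ) :
    ∑ j ∈ Finset.Icc a b, f j = ∑ i ∈ Finset.range ((b + 1 - a).toNat), f (a + (i:ℤ)) := by
  refine Finset.sum_nbij' (fun j => (j - a).toNat) (fun i => a + (i:ℤ)) ?_ ?_ ?_ ?_ ?_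
   <;> intros <;> simp_all [Finset.mem_Icc, Finset.mem_range] <;> omega

omit hγ in
lemma prod_Icc_nat (f : ℤ → ℝ) (a b : ℤ) :
    ∏ j ∈ Finset.Icc a b, f j = ∏ i ∈ Finset.range ((b + 1 - a).toNat), f (a + (i:ℤ)) := by
  refine Finset.prod_nbij' (fun j => (j - a).toNat) (fun i => a + (i:ℤ)) ?_ ?_ ?_ ?_ ?_
   <;> intros <;> simp_all [Finset.mem_Icc, Finset.mem_range] <;> omega

omit hγ in
lemma qpos : 0 < (2:ℝ) ^ (-β) := Real.rpow_pos_of_pos two_pos _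

omit hγ in
lemma qlt_half (hβ1 : 1 < β) : (2:ℝ) ^ (-β) < 1/2 := by
  have : (2:ℝ) ^ (-β) < (2:ℝ) ^ (-1:ℝ) :=
    Real.rpow_lt_rpow_left_iff (by norm_num) |>.mpr (by linarith)
  simpa [Real.rpow_neg_one] using this

omit hγ in
lemma Qge2 (hβ1 : 1 < β) : 2 ≤ (2:ℝ) ^ β := by
  calc (2:ℝ) = (2:ℝ) ^ (1:ℝ) := by rw [Real.rpow_one]
    _ ≤ (2:ℝ) ^ β := Real.rpow_le_rpow_of_exponent_le (by norm_num) hβ1.le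

omit hγ in
lemma qQ_one : (2:ℝ) ^ (-β) * (2:ℝ) ^ β = 1 := by
  rw [← Real.rpow_add (by norm_num)]; simp

omit hγ in
lemma rpow_bridge (m : ℕ) : (2:ℝ) ^ (β * (-(m:ℝ))) = ((2:ℝ) ^ (-β)) ^ m := by
  rw [show β * (-(m:ℝ)) = (-β) * (m:ℝ) by ring, Real.rpow_mul (by norm_num),
    Real.rpow_natCast]

omit hγ in
lemma rpow_bridgeQ (m : ℕ) : (2:ℝ) ^ (β * (m:ℝ)) = ((2:ℝ) ^ β) ^ m := by
  rw [Real.rpow_mul (by norm_num), Real.rpow_natCast]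

omit hγ in
lemma toNat_cast_real {a : ℤ} (h : 0 ≤ a) : ((a.toNat : ℕ) : ℝ) = (a : ℝ) := by
  exact_mod_cast congrArg (fun z : ℤ => (z : ℝ)) (Int.toNat_of_nonneg h)

lemma ratio_ub_q {k j : ℤ} (hk : (n₀:ℤ) ≤ k) (hj : (n₀:ℤ) ≤ j) (hkj : k ≤ j) :
    γ ((2:ℝ) ^ k) / γ ((2:ℝ) ^ j) ≤ 3/2 * ((2:ℝ) ^ (-β)) ^ ((j - k).toNat) := by
  have h := (hγ.2.2 k j hk hj).2
  have hm : (((j - k).toNat : ℕ) : ℝ) = (j : ℝ) - (k : ℝ) := by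
    rw [toNat_cast_real (by omega)]; push_cast; ring
  rwa [show β * ((k:ℝ) - (j:ℝ)) = β * (-(((j - k).toNat : ℕ) : ℝ)) by rw [hm]; ring,
    rpow_bridge] at h

lemma ratio_lb_Q {j k : ℤ} (hj : (n₀:ℤ) ≤ j) (hk : (n₀:ℤ) ≤ k) (hjk : j ≤ k) :
    1/2 * ((2:ℝ) ^ β) ^ ((k - j).toNat) ≤ γ ((2:ℝ) ^ k) / γ ((2:ℝ) ^ j) := by
  have h := (hγ.2.2 k j hk hj).1
  have hm : (((k - j).toNat : ℕ) : ℝ) = (k : ℝ) - (j : ℝ) := by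
    rw [toNat_cast_real (by omega)]; push_cast; ring
  rwa [show β * ((k:ℝ) - (j:ℝ)) = β * (((k - j).toNat : ℕ) : ℝ) by rw [hm],
    rpow_bridgeQ] at h

lemma estE1 (hβ1 : 1 < β) {k j : ℤ} (hk : (n₀:ℤ) ≤ k) (hj : (n₀:ℤ) ≤ j) (hkj : k < j) :
    0 < 1 - γ ((2:ℝ) ^ k) / γ ((2:ℝ) ^ j) ∧
      (1 - γ ((2:ℝ) ^ k) / γ ((2:ℝ) ^ j))⁻¹ ≤
        Real.exp (6 * ((2:ℝ) ^ (-β)) ^ ((j - k).toNat)) := by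
  set q : ℝ := (2:ℝ) ^ (-β) with hqdef
  have hq0 : 0 < q := qpos (β := β)
  have hqh : q < 1/2 := qlt_half hβ1
  set x := γ ((2:ℝ) ^ k) / γ ((2:ℝ) ^ j) with hx
  have hx0 : 0 < x := div_pos (apos hγ k) (apos hγ j)
  set m : ℕ := (j - k).toNat with hmdef
  have hm1 : 1 ≤ m := by omega
  have hqm : q ^ m ≤ q := by
    calc q ^ m ≤ q ^ 1 := pow_le_pow_of_le_one hq0.le (by linarith) hm1
      _ = q := pow_one q
  have hub : x ≤ 3/2 * q ^ m := ratio_ub_q hγ hk hj hkj.le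
  have hx34 : x ≤ 3/4 := by nlinarith
  have hpos : 0 < 1 - x := by linarith
  refine ⟨hpos, ?_⟩
  have h14 : (1 - x)⁻¹ ≤ 1 + 4 * x := by
    rw [inv_eq_one_div, div_le_iff₀ (by linarith)]
    nlinarith
  have h2 : 1 + 4 * x ≤ Real.exp (4 * x) := by
    have := Real.add_one_le_exp (4 * x)
    linarith
  have h3 : Real.exp (4 * x) ≤ Real.exp (6 * q ^ m) :=
    Real.exp_le_exp.mpr (by nlinarith)
  linarith

lemma estE2 (hβ1 : 1 < β) {j k : ℤ} (hj : (n₀:ℤ) ≤ j) (hk : (n₀:ℤ) ≤ k) (hjk : j < k) :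
    |1 - γ ((2:ℝ) ^ k) / γ ((2:ℝ) ^ j)|⁻¹ ≤
      (1/2 - (2:ℝ) ^ (-β))⁻¹ * ((2:ℝ) ^ (-β)) ^ ((k - j).toNat) := by
  obtain ⟨q, hqdef⟩ : ∃ q : ℝ, (2:ℝ) ^ (-β) = q := ⟨_, rfl⟩
  obtain ⟨Q, hQdef⟩ : ∃ Q : ℝ, (2:ℝ) ^ β = Q := ⟨_, rfl⟩
  obtain ⟨x, hxdef⟩ : ∃ x : ℝ, γ ((2:ℝ) ^ k) / γ ((2:ℝ) ^ j) = x := ⟨_, rfl⟩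
  obtain ⟨m, hmdef⟩ : ∃ m : ℕ, (k - j).toNat = m := ⟨_, rfl⟩
  have hq0 : 0 < q := hqdef ▸ qpos (β := β)
  have hqh : q < 1/2 := hqdef ▸ qlt_half hβ1
  have hQ2 : 2 ≤ Q := hQdef ▸ Qge2 hβ1
  have hqQ : q * Q = 1 := by rw [← hqdef, ← hQdef]; exact qQ_one (β := β)
  have hm1 : 1 ≤ m := by omega
  have hlb : 1/2 * Q ^ m ≤ x := by
    rw [← hQdef, ← hxdef, ← hmdef]; exact ratio_lb_Q hγ hj hk hjk.le
  have hQm : Q ≤ Q ^ m := by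
    calc Q = Q ^ 1 := (pow_one Q).symm
      _ ≤ Q ^ m := pow_le_pow_right₀ (by linarith) hm1
  have hQmpos : 0 < Q ^ m := by positivity
  have hqQm : 1 ≤ q * Q ^ m := by
    calc (1:ℝ) = q * Q := hqQ.symm
      _ ≤ q * Q ^ m := by nlinarith
  have hkey : (1/2 - q) * Q ^ m ≤ x - 1 := by nlinarith
  have hc0 : (0:ℝ) < 1/2 - q := by linarith
  have hcQ : 0 < (1/2 - q) * Q ^ m := mul_pos hc0 hQmpos
  rw [hqdef, hxdef, hmdef, abs_sub_comm, abs_of_pos (by linarith : (0:ℝ) < x - 1)]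
  calc (x - 1)⁻¹ ≤ ((1/2 - q) * Q ^ m)⁻¹ := inv_anti₀ hcQ hkey
    _ = (1/2 - q)⁻¹ * (Q ^ m)⁻¹ := by rw [mul_inv]
    _ = (1/2 - q)⁻¹ * q ^ m := by
        congr 1
        rw [← inv_pow]
        congr 1
        rw [inv_eq_one_div, div_eq_iff (by linarith : Q ≠ 0)]
        linarith [hqQ]

lemma ratio_ub_Q {j k : ℤ} (hj : (n₀:ℤ) ≤ j) (hk : (n₀:ℤ) ≤ k) (hjk : j ≤ k) :
    γ ((2:ℝ) ^ k) / γ ((2:ℝ) ^ j) ≤ 3/2 * ((2:ℝ) ^ β) ^ ((k - j).toNat) := by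
  have h := (hγ.2.2 k j hk hj).2
  have hm : (((k - j).toNat : ℕ) : ℝ) = (k : ℝ) - (j : ℝ) := by
    rw [toNat_cast_real (by omega)]; push_cast; ring
  rwa [show β * ((k:ℝ) - (j:ℝ)) = β * (((k - j).toNat : ℕ) : ℝ) by rw [hm],
    rpow_bridgeQ] at h

omit hγ in
lemma geom_tail_le (hβ1 : 1 < β) (M : ℕ) :
    ∑ i ∈ Finset.range M, (6 : ℝ) * ((2:ℝ) ^ (-β)) ^ (i + 1) ≤ 6 := by
  have hq0 : (0:ℝ) < (2:ℝ) ^ (-β) := qpos (β := β)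
  have hqh : (2:ℝ) ^ (-β) < 1/2 := qlt_half hβ1
  have hgeo : ∑ i ∈ Finset.range M, ((2:ℝ) ^ (-β)) ^ i ≤ (1 - (2:ℝ) ^ (-β))⁻¹ := by
    have hs : Summable (fun i : ℕ => ((2:ℝ) ^ (-β)) ^ i) :=
      summable_geometric_of_lt_one hq0.le (by linarith)
    calc ∑ i ∈ Finset.range M, ((2:ℝ) ^ (-β)) ^ i ≤ ∑' i : ℕ, ((2:ℝ) ^ (-β)) ^ i :=
          Summable.sum_le_tsum _ (fun i _ => by positivity) hs
      _ = (1 - (2:ℝ) ^ (-β))⁻¹ := tsum_geometric_of_lt_one hq0.le (by linarith)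
  have hrw : ∀ i : ℕ, (6 : ℝ) * ((2:ℝ) ^ (-β)) ^ (i + 1)
      = (6 * (2:ℝ) ^ (-β)) * ((2:ℝ) ^ (-β)) ^ i := fun i => by rw [pow_succ]; ring
  rw [Finset.sum_congr rfl fun i _ => hrw i, ← Finset.mul_sum]
  have hinv : (1 - (2:ℝ) ^ (-β))⁻¹ ≤ 2 := by
    rw [inv_eq_one_div, div_le_iff₀ (by linarith)]; linarith
  have h1 : (6 * (2:ℝ) ^ (-β)) * ∑ i ∈ Finset.range M, ((2:ℝ) ^ (-β)) ^ i
      ≤ (6 * (2:ℝ) ^ (-β)) * (1 - (2:ℝ) ^ (-β))⁻¹ := by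
    apply mul_le_mul_of_nonneg_left hgeo (by positivity)
  nlinarith [hq0, hqh, hgeo, Finset.sum_nonneg (fun i (_ : i ∈ Finset.range M) =>
    pow_nonneg hq0.le i)]

lemma prodP1 (hβ1 : 1 < β) {l k n : ℤ} (hl : (n₀:ℤ) ≤ l) (hk : l ≤ k) :
    ∏ j ∈ Finset.Icc (k+1) (n+1), (1 - γ ((2:ℝ) ^ k) / γ ((2:ℝ) ^ j))⁻¹ ≤ Real.exp 6 := by
  have hmem : ∀ j ∈ Finset.Icc (k+1) (n+1), (n₀:ℤ) ≤ j ∧ k < j := by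
    intro j hj; rw [Finset.mem_Icc] at hj; omega
  calc ∏ j ∈ Finset.Icc (k+1) (n+1), (1 - γ ((2:ℝ) ^ k) / γ ((2:ℝ) ^ j))⁻¹
      ≤ ∏ j ∈ Finset.Icc (k+1) (n+1),
          Real.exp (6 * ((2:ℝ) ^ (-β)) ^ ((j - k).toNat)) := by
        apply Finset.prod_le_prod
        · intro j hj
          exact inv_nonneg.mpr (estE1 hγ hβ1 (by omega) (hmem j hj).1 (hmem j hj).2).1.le
        · intro j hj
          exact (estE1 hγ hβ1 (by omega) (hmem j hj).1 (hmem j hj).2).2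
    _ = Real.exp (∑ j ∈ Finset.Icc (k+1) (n+1), 6 * ((2:ℝ) ^ (-β)) ^ ((j - k).toNat)) :=
        (Real.exp_sum _ _).symm
    _ ≤ Real.exp 6 := by
        apply Real.exp_le_exp.mpr
        rw [sum_Icc_nat]
        have hcg : ∀ i ∈ Finset.range ((n + 1 + 1 - (k+1)).toNat),
            (6 : ℝ) * ((2:ℝ) ^ (-β)) ^ ((k + 1 + (i:ℤ) - k).toNat)
              = 6 * ((2:ℝ) ^ (-β)) ^ (i + 1) := by
          intro i _
          congr 2
          omega
        rw [Finset.sum_congr rfl hcg]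
        exact geom_tail_le hβ1 _

lemma prodP2 (hβ1 : 1 < β) {l k : ℤ} (hl : (n₀:ℤ) ≤ l) (hk : l ≤ k) :
    ∏ j ∈ Finset.Icc l (k-1), |1 - γ ((2:ℝ) ^ k) / γ ((2:ℝ) ^ j)|⁻¹
      ≤ ∏ m ∈ Finset.range ((k-l).toNat),
          ((1/2 - (2:ℝ) ^ (-β))⁻¹ * ((2:ℝ) ^ (-β)) ^ (m+1)) := by
  have hmem : ∀ j ∈ Finset.Icc l (k-1), (n₀:ℤ) ≤ j ∧ j < k := by
    intro j hj; rw [Finset.mem_Icc] at hj; omega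
  calc ∏ j ∈ Finset.Icc l (k-1), |1 - γ ((2:ℝ) ^ k) / γ ((2:ℝ) ^ j)|⁻¹
      ≤ ∏ j ∈ Finset.Icc l (k-1),
          ((1/2 - (2:ℝ) ^ (-β))⁻¹ * ((2:ℝ) ^ (-β)) ^ ((k - j).toNat)) := by
        apply Finset.prod_le_prod
        · intro j hj; exact inv_nonneg.mpr (abs_nonneg _)
        · intro j hj; exact estE2 hγ hβ1 (hmem j hj).1 (by omega) (hmem j hj).2
    _ = ∏ m ∈ Finset.range ((k-l).toNat),
          ((1/2 - (2:ℝ) ^ (-β))⁻¹ * ((2:ℝ) ^ (-β)) ^ (m+1)) := by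
        rw [prod_Icc_nat]
        rw [← Finset.prod_range_reflect
          (fun m => (1/2 - (2:ℝ) ^ (-β))⁻¹ * ((2:ℝ) ^ (-β)) ^ (m+1)) ((k-l).toNat)]
        have hM : (k - 1 + 1 - l).toNat = (k-l).toNat := by omega
        rw [hM]
        apply Finset.prod_congr rfl
        intro m hm
        rw [Finset.mem_range] at hm
        congr 2
        omega

end aux

noncomputable def ufun (β : ℝ) (i : ℕ) : ℝ :=
  ((2:ℝ) ^ β) ^ i * ((2:ℝ) ^ β) ^ i *
    ∏ m ∈ Finset.range i, ((1/2 - (2:ℝ) ^ (-β))⁻¹ * ((2:ℝ) ^ (-β)) ^ (m+1))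

section aux2
variable {β : ℝ} {γ : ℝ → ℝ} {n₀ : ℕ} (hγ : GammaHyp β γ n₀)

lemma ufun_pos (hβ1 : 1 < β) (i : ℕ) : 0 < ufun β i := by
  have hq0 : (0:ℝ) < (2:ℝ) ^ (-β) := qpos (β := β)
  have hqh : (2:ℝ) ^ (-β) < 1/2 := qlt_half hβ1
  have hQ0 : (0:ℝ) < (2:ℝ) ^ β := Real.rpow_pos_of_pos two_pos β
  exact mul_pos (mul_pos (pow_pos hQ0 i) (pow_pos hQ0 i))
    (Finset.prod_pos fun m _ => mul_pos (inv_pos.mpr (by linarith)) (pow_pos hq0 _))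

lemma ufun_succ (i : ℕ) : ufun β (i+1) =
    ufun β i * ((2:ℝ) ^ β * (2:ℝ) ^ β * (1/2 - (2:ℝ) ^ (-β))⁻¹ * ((2:ℝ) ^ (-β)) ^ (i+1)) := by
  rw [ufun, ufun, Finset.prod_range_succ, pow_succ, pow_succ]
  ring

lemma ufun_bound (hβ1 : 1 < β) :
    ∃ C : ℝ, 0 < C ∧ ∀ M : ℕ, ∑ i ∈ Finset.range M, ufun β i ≤ C := by
  have hq0 : (0:ℝ) < (2:ℝ) ^ (-β) := qpos (β := β)
  have hqh : (2:ℝ) ^ (-β) < 1/2 := qlt_half hβ1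
  have hQ0 : (0:ℝ) < (2:ℝ) ^ β := Real.rpow_pos_of_pos two_pos β
  have hK0 : (0:ℝ) < (2:ℝ) ^ β * (2:ℝ) ^ β * (1/2 - (2:ℝ) ^ (-β))⁻¹ :=
    mul_pos (mul_pos hQ0 hQ0) (inv_pos.mpr (by linarith))
  have hsumm : Summable (ufun β) := by
    apply summable_of_ratio_norm_eventually_le (r := 1/2) (by norm_num)
    have hev : ∀ᶠ i in Filter.atTop, ((2:ℝ) ^ (-β)) ^ (i+1) <
        (1/2) / ((2:ℝ) ^ β * (2:ℝ) ^ β * (1/2 - (2:ℝ) ^ (-β))⁻¹) := by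
      have h := tendsto_pow_atTop_nhds_zero_of_lt_one hq0.le (by linarith : (2:ℝ) ^ (-β) < 1)
      have h2 := h.eventually_lt_const (by positivity :
        (0:ℝ) < (1/2) / ((2:ℝ) ^ β * (2:ℝ) ^ β * (1/2 - (2:ℝ) ^ (-β))⁻¹))
      rw [Filter.eventually_atTop] at h2 ⊢
      obtain ⟨I, hI⟩ := h2
      exact ⟨I, fun i hi => hI (i+1) (by omega)⟩
    filter_upwards [hev] with i hi
    have hu0 : 0 < ufun β i := ufun_pos hβ1 i
    have hu1 : 0 < ufun β (i+1) := ufun_pos hβ1 (i+1)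
    rw [Real.norm_eq_abs, Real.norm_eq_abs, abs_of_pos hu0, abs_of_pos hu1, ufun_succ]
    have hfac : (2:ℝ) ^ β * (2:ℝ) ^ β * (1/2 - (2:ℝ) ^ (-β))⁻¹ * ((2:ℝ) ^ (-β)) ^ (i+1)
        ≤ 1/2 := by
      rw [mul_comm]
      exact ((lt_div_iff₀ hK0).mp hi).le
    calc ufun β i * ((2:ℝ) ^ β * (2:ℝ) ^ β * (1/2 - (2:ℝ) ^ (-β))⁻¹ * ((2:ℝ) ^ (-β)) ^ (i+1))
        ≤ ufun β i * (1/2) := mul_le_mul_of_nonneg_left hfac hu0.le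
      _ = 1/2 * ufun β i := by ring
  refine ⟨∑' i, ufun β i, ?_, fun M => Summable.sum_le_tsum _ (fun i _ => (ufun_pos hβ1 i).le) hsumm⟩
  have := Summable.sum_le_tsum (Finset.range 1) (fun i (_ : i ∉ Finset.range 1) => (ufun_pos hβ1 i).le)
    hsumm
  calc (0:ℝ) < ufun β 0 := ufun_pos hβ1 0
    _ = ∑ i ∈ Finset.range 1, ufun β i := by simp
    _ ≤ ∑' i, ufun β i := this
end aux2

section aux3
variable {β : ℝ} {γ : ℝ → ℝ} {n₀ : ℕ} (hγ : GammaHyp β γ n₀)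
include hγ

lemma term_bound (hβ1 : 1 < β) {l n k : ℤ} (hl : (n₀:ℤ) ≤ l)
    (hk1 : l ≤ k) (hk2 : k ≤ n+1) :
    γ ((2:ℝ) ^ k) / γ ((2:ℝ) ^ (n+1)) * |Aco γ l (n+1) k| ≤
      9/4 * Real.exp 6 * ((2:ℝ) ^ (-β)) ^ ((n+1-l).toNat) * ufun β ((k-l).toNat) := by
  have hq0 : (0:ℝ) < (2:ℝ) ^ (-β) := qpos (β := β)
  have hqh : (2:ℝ) ^ (-β) < 1/2 := qlt_half hβ1
  have hQ0 : (0:ℝ) < (2:ℝ) ^ β := Real.rpow_pos_of_pos two_pos β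
  have hsplit : (Finset.Icc l (n+1)).erase k
      = Finset.Icc l (k-1) ∪ Finset.Icc (k+1) (n+1) := by
    ext j; simp only [Finset.mem_erase, Finset.mem_Icc, Finset.mem_union]; omega
  have hdisj : Disjoint (Finset.Icc l (k-1)) (Finset.Icc (k+1) (n+1)) := by
    rw [Finset.disjoint_left]; intro j hj1 hj2
    rw [Finset.mem_Icc] at hj1 hj2; omega
  have hrpos : 0 < γ ((2:ℝ) ^ k) / γ ((2:ℝ) ^ l) :=
    div_pos (apos hγ k) (apos hγ l)
  have habs : |Aco γ l (n+1) k| = γ ((2:ℝ) ^ k) / γ ((2:ℝ) ^ l) *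
      ((∏ j ∈ Finset.Icc l (k-1), |1 - γ ((2:ℝ) ^ k) / γ ((2:ℝ) ^ j)|⁻¹) *
       (∏ j ∈ Finset.Icc (k+1) (n+1), (1 - γ ((2:ℝ) ^ k) / γ ((2:ℝ) ^ j))⁻¹)) := by
    rw [Aco, hsplit, Finset.prod_union hdisj, abs_mul, abs_mul, abs_of_pos hrpos,
      Finset.abs_prod, Finset.abs_prod]
    congr 1
    congr 1
    · exact Finset.prod_congr rfl fun j hj => abs_inv _
    · refine Finset.prod_congr rfl fun j hj => ?_
      rw [Finset.mem_Icc] at hj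
      exact abs_of_pos (inv_pos.mpr (estE1 hγ hβ1 (by omega) (by omega) (by omega)).1)
  have hB1 : γ ((2:ℝ) ^ k) / γ ((2:ℝ) ^ (n+1)) ≤ 3/2 * ((2:ℝ) ^ (-β)) ^ ((n+1-k).toNat) :=
    ratio_ub_q hγ (by omega) (by omega) (by omega)
  have hB2 : γ ((2:ℝ) ^ k) / γ ((2:ℝ) ^ l) ≤ 3/2 * ((2:ℝ) ^ β) ^ ((k-l).toNat) :=
    ratio_ub_Q hγ (by omega) (by omega) hk1
  have hB3 := prodP2 hγ hβ1 hl hk1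
  have hB4 := prodP1 hγ hβ1 (n := n) hl hk1
  have hP2nn : (0:ℝ) ≤ ∏ j ∈ Finset.Icc l (k-1), |1 - γ ((2:ℝ) ^ k) / γ ((2:ℝ) ^ j)|⁻¹ :=
    Finset.prod_nonneg fun j _ => inv_nonneg.mpr (abs_nonneg _)
  have hP1nn : (0:ℝ) ≤ ∏ j ∈ Finset.Icc (k+1) (n+1), (1 - γ ((2:ℝ) ^ k) / γ ((2:ℝ) ^ j))⁻¹ := by
    apply Finset.prod_nonneg
    intro j hj
    rw [Finset.mem_Icc] at hj
    exact inv_nonneg.mpr (estE1 hγ hβ1 (by omega) (by omega) (by omega)).1.le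
  have hbnn : (0:ℝ) ≤ ∏ m ∈ Finset.range ((k-l).toNat),
      ((1/2 - (2:ℝ) ^ (-β))⁻¹ * ((2:ℝ) ^ (-β)) ^ (m+1)) :=
    Finset.prod_nonneg fun m _ => mul_nonneg (inv_nonneg.mpr (by linarith)) (by positivity)
  rw [habs]
  have step : γ ((2:ℝ) ^ k) / γ ((2:ℝ) ^ (n+1)) * (γ ((2:ℝ) ^ k) / γ ((2:ℝ) ^ l) *
      ((∏ j ∈ Finset.Icc l (k-1), |1 - γ ((2:ℝ) ^ k) / γ ((2:ℝ) ^ j)|⁻¹) *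
       (∏ j ∈ Finset.Icc (k+1) (n+1), (1 - γ ((2:ℝ) ^ k) / γ ((2:ℝ) ^ j))⁻¹)))
      ≤ (3/2 * ((2:ℝ) ^ (-β)) ^ ((n+1-k).toNat)) * ((3/2 * ((2:ℝ) ^ β) ^ ((k-l).toNat)) *
        ((∏ m ∈ Finset.range ((k-l).toNat),
            ((1/2 - (2:ℝ) ^ (-β))⁻¹ * ((2:ℝ) ^ (-β)) ^ (m+1))) * Real.exp 6)) := by
    apply mul_le_mul hB1 _ _ (by positivity)
    · apply mul_le_mul hB2 _ _ (by positivity)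
      · exact mul_le_mul hB3 hB4 hP1nn hbnn
      · exact mul_nonneg hP2nn hP1nn
    · exact mul_nonneg hrpos.le (mul_nonneg hP2nn hP1nn)
  refine le_trans step (le_of_eq ?_)
  have hiN : (k-l).toNat ≤ (n+1-l).toNat := by omega
  have hNk : (n+1-k).toNat = (n+1-l).toNat - (k-l).toNat := by omega
  have hqQi : ((2:ℝ) ^ (-β)) ^ ((k-l).toNat) * ((2:ℝ) ^ β) ^ ((k-l).toNat) = 1 := by
    rw [← mul_pow, qQ_one (β := β), one_pow]
  have hqN : ((2:ℝ) ^ (-β)) ^ ((n+1-l).toNat - (k-l).toNat)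
      = ((2:ℝ) ^ (-β)) ^ ((n+1-l).toNat) * ((2:ℝ) ^ β) ^ ((k-l).toNat) := by
    calc ((2:ℝ) ^ (-β)) ^ ((n+1-l).toNat - (k-l).toNat)
        = ((2:ℝ) ^ (-β)) ^ ((n+1-l).toNat - (k-l).toNat) *
          (((2:ℝ) ^ (-β)) ^ ((k-l).toNat) * ((2:ℝ) ^ β) ^ ((k-l).toNat)) := by
          rw [hqQi, mul_one]
      _ = (((2:ℝ) ^ (-β)) ^ ((n+1-l).toNat - (k-l).toNat) * ((2:ℝ) ^ (-β)) ^ ((k-l).toNat)) *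
          ((2:ℝ) ^ β) ^ ((k-l).toNat) := by ring
      _ = ((2:ℝ) ^ (-β)) ^ ((n+1-l).toNat) * ((2:ℝ) ^ β) ^ ((k-l).toNat) := by
          rw [pow_sub_mul_pow _ hiN]
  rw [hNk, hqN, ufun]
  ring

lemma part3 (hβ1 : 1 < β) {C : ℝ} (hC0 : 0 ≤ C)
    (hC : ∀ M : ℕ, ∑ i ∈ Finset.range M, ufun β i ≤ C)
    {l n : ℤ} (hl : (n₀:ℤ) ≤ l) (hln : l ≤ n) {t : ℝ} (ht : 0 ≤ t) :
    |Psi γ l n t - Psi γ l (n+1) t| ≤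
      9/4 * Real.exp 6 * C * (2:ℝ) ^ (-(β * ((n:ℝ) - (l:ℝ)))) *
        Real.exp (-(γ ((2:ℝ) ^ l) * t / 4)) := by
  have hq0 : (0:ℝ) < (2:ℝ) ^ (-β) := qpos (β := β)
  have hqh : (2:ℝ) ^ (-β) < 1/2 := qlt_half hβ1
  rw [psi_diff hγ hl hln t, abs_neg]
  have hterm : ∀ k ∈ Finset.Icc l (n+1),
      |γ ((2:ℝ) ^ k) / γ ((2:ℝ) ^ (n+1)) * Aco γ l (n+1) k *
          Real.exp (-(γ ((2:ℝ) ^ k) * t / 4))|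
        ≤ (9/4 * Real.exp 6 * ((2:ℝ) ^ (-β)) ^ ((n+1-l).toNat) *
            Real.exp (-(γ ((2:ℝ) ^ l) * t / 4))) * ufun β ((k-l).toNat) := by
    intro k hk
    rw [Finset.mem_Icc] at hk
    have hxpos : 0 < γ ((2:ℝ) ^ k) / γ ((2:ℝ) ^ (n+1)) :=
      div_pos (apos hγ k) (apos hγ (n+1))
    rw [abs_mul, abs_mul, abs_of_pos hxpos, Real.abs_exp]
    have hee : Real.exp (-(γ ((2:ℝ) ^ k) * t / 4)) ≤ Real.exp (-(γ ((2:ℝ) ^ l) * t / 4)) := by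
      apply Real.exp_le_exp.mpr
      have hgle : γ ((2:ℝ) ^ l) ≤ γ ((2:ℝ) ^ k) := ale hγ hl hk.1
      nlinarith
    have htb := term_bound hγ hβ1 hl hk.1 hk.2
    calc γ ((2:ℝ) ^ k) / γ ((2:ℝ) ^ (n+1)) * |Aco γ l (n+1) k| *
          Real.exp (-(γ ((2:ℝ) ^ k) * t / 4))
        ≤ (9/4 * Real.exp 6 * ((2:ℝ) ^ (-β)) ^ ((n+1-l).toNat) * ufun β ((k-l).toNat)) *
          Real.exp (-(γ ((2:ℝ) ^ l) * t / 4)) := by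
          apply mul_le_mul htb hee (Real.exp_pos _).le
          have := ufun_pos (β := β) hβ1 ((k-l).toNat)
          positivity
      _ = (9/4 * Real.exp 6 * ((2:ℝ) ^ (-β)) ^ ((n+1-l).toNat) *
            Real.exp (-(γ ((2:ℝ) ^ l) * t / 4))) * ufun β ((k-l).toNat) := by ring
  refine le_trans (Finset.abs_sum_le_sum_abs _ _) (le_trans (Finset.sum_le_sum hterm) ?_)
  rw [← Finset.mul_sum]
  have hre : ∑ k ∈ Finset.Icc l (n+1), ufun β ((k-l).toNat)
      = ∑ i ∈ Finset.range ((n+1+1-l).toNat), ufun β ((l+(i:ℤ)-l).toNat) :=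
    sum_Icc_nat (fun k => ufun β ((k-l).toNat)) l (n+1)
  have hre2 : ∑ i ∈ Finset.range ((n+1+1-l).toNat), ufun β ((l+(i:ℤ)-l).toNat)
      = ∑ i ∈ Finset.range ((n+1+1-l).toNat), ufun β i :=
    Finset.sum_congr rfl fun i _ => by congr 1; omega
  have hsumC : ∑ k ∈ Finset.Icc l (n+1), ufun β ((k-l).toNat) ≤ C := by
    rw [hre, hre2]; exact hC _
  have hKnn : (0:ℝ) ≤ 9/4 * Real.exp 6 * ((2:ℝ) ^ (-β)) ^ ((n+1-l).toNat) *
      Real.exp (-(γ ((2:ℝ) ^ l) * t / 4)) := by positivity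
  refine le_trans (mul_le_mul_of_nonneg_left hsumC hKnn) ?_
  have hbridge : ((2:ℝ) ^ (-β)) ^ ((n-l).toNat) = (2:ℝ) ^ (-(β * ((n:ℝ) - (l:ℝ)))) := by
    rw [← rpow_bridge (β := β) ((n-l).toNat)]
    congr 1
    rw [toNat_cast_real (by omega : (0:ℤ) ≤ n - l)]
    push_cast
    ring
  have hqN : ((2:ℝ) ^ (-β)) ^ ((n+1-l).toNat) ≤ (2:ℝ) ^ (-(β * ((n:ℝ) - (l:ℝ)))) := by
    rw [← hbridge, show (n+1-l).toNat = (n-l).toNat + 1 by omega, pow_succ]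
    exact mul_le_of_le_one_right (by positivity) (by linarith)
  calc 9/4 * Real.exp 6 * ((2:ℝ) ^ (-β)) ^ ((n+1-l).toNat) *
        Real.exp (-(γ ((2:ℝ) ^ l) * t / 4)) * C
      ≤ 9/4 * Real.exp 6 * ((2:ℝ) ^ (-(β * ((n:ℝ) - (l:ℝ))))) *
        Real.exp (-(γ ((2:ℝ) ^ l) * t / 4)) * C := by
        have he := (Real.exp_pos (-(γ ((2:ℝ) ^ l) * t / 4))).le
        have h6 := (Real.exp_pos (6:ℝ)).le
        nlinarith [mul_le_mul_of_nonneg_left hqN (by positivity : (0:ℝ) ≤ 9/4 * Real.exp 6),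
          mul_le_mul_of_nonneg_right (mul_le_mul_of_nonneg_left hqN
            (by positivity : (0:ℝ) ≤ 9/4 * Real.exp 6))
            (mul_nonneg he hC0)]
    _ = 9/4 * Real.exp 6 * C * (2:ℝ) ^ (-(β * ((n:ℝ) - (l:ℝ)))) *
        Real.exp (-(γ ((2:ℝ) ^ l) * t / 4)) := by ring

end aux3

/-- `Ψ^{(ℓ)}` has initial datum `δ(n−ℓ)`, solves
`dΨ_n/dt = (γ(2^n)/4)(Ψ_{n−1} − Ψ_n)` for `n ≥ n₀ + 1`, and its discrete derivative satisfies
`|Ψ_n^{(ℓ)}(t) − Ψ_{n+1}^{(ℓ)}(t)| ≤ c₁ 2^{−β(n−ℓ)} e^{−γ(2^ℓ)t/4}` with `c₁` depending only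
on `β`. -/
theorem stmt9 (β : ℝ) (hβ : β ∈ Set.Ioo (1:ℝ) 2) :
    ∃ c₁ > (0:ℝ), ∀ (γ : ℝ → ℝ) (n₀ : ℕ), GammaHyp β γ n₀ →
      ∀ l : ℤ, (n₀:ℤ) ≤ l →
        (∀ n : ℤ, Psi γ l n 0 = if n = l then 1 else 0) ∧
        (∀ n : ℤ, (n₀:ℤ) + 1 ≤ n → ∀ t : ℝ, 0 < t →
          HasDerivAt (fun s => Psi γ l n s)
            (γ ((2:ℝ) ^ n) / 4 * (Psi γ l (n - 1) t - Psi γ l n t)) t) ∧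
        (∀ n : ℤ, l ≤ n → ∀ t : ℝ, 0 < t →
          |Psi γ l n t - Psi γ l (n + 1) t| ≤
            c₁ * (2:ℝ) ^ (-(β * ((n:ℝ) - (l:ℝ)))) * Real.exp (-(γ ((2:ℝ) ^ l) * t / 4))) := by
  obtain ⟨C, hC0, hC⟩ := ufun_bound (β := β) hβ.1
  refine ⟨9/4 * Real.exp 6 * C, by positivity, fun γ n₀ hγ l hl => ?_⟩
  exact ⟨part1init hγ hl,
    fun n hn t _ => part2deriv hγ hl n hn t,
    fun n hn t ht => part3 hγ hβ.1 hC0.le hC hl hn ht.le⟩
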